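/- Let v₁, v₂ be an orthonormal basis of ℝ², let a₁, a₂ > 0, and set Q(n) = (a₁ n·v₁)² + (a₂ n·v₂)² for n ∈ ℤ². For every R > 0, the family indexed by n ∈ ℤ² \ {0} with terms (a₁a₂/(π Q(n))) J₂(√(Q(n))·√R) is absolutely summable. -/

import Mathlib

open Real MeasureTheory

/-- The Bessel function `J_m` for a nonnegative integer `m`. -/
noncomputable def besselJ (m : ℕ) (x : ℝ) : ℝ :=
  (1 / π) * ∫ θ in (0:ℝ)..π, Real.cos (m * θ - x * Real.sin θ)

/-- The lattice point `n ∈ ℤ²` as a vector in `ℝ²`. -/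
noncomputable def latVec (n : ℤ × ℤ) : EuclideanSpace ℝ (Fin 2) :=
  (WithLp.equiv 2 (Fin 2 → ℝ)).symm ![(n.1 : ℝ), (n.2 : ℝ)]

/-- The quadratic form `Q(n) = (a₁ n·v₁)² + (a₂ n·v₂)²` on lattice points. -/
noncomputable def Qform (v₁ v₂ : EuclideanSpace ℝ (Fin 2)) (a₁ a₂ : ℝ) (n : ℤ × ℤ) : ℝ :=
  (a₁ * (inner ℝ (latVec n) v₁ : ℝ)) ^ 2 + (a₂ * (inner ℝ (latVec n) v₂ : ℝ)) ^ 2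

open intervalIntegral

lemma osc_bound (x a b lam : ℝ) (hx : 0 < x) (ha : 0 ≤ a) (hab : a ≤ b) (hb : b ≤ π)
    (hlam : 0 < lam)
    (habs : ∀ θ ∈ Set.Icc a b, lam ≤ |2 - x * Real.cos θ|) :
    |∫ θ in a..b, Real.cos (2 * θ - x * Real.sin θ)| ≤ 4 / lam := by
  set p : ℝ → ℝ := fun θ => 2 - x * Real.cos θ with hpdef
  have hpne : ∀ θ ∈ Set.Icc a b, p θ ≠ 0 := fun θ hθ => by
    have := habs θ hθ; intro h0
    rw [hpdef] at h0; simp only [p] at h0; rw [h0, abs_zero] at this; linarith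
  set φ : ℝ → ℝ := fun θ => 2 * θ - x * Real.sin θ with hφdef
  set g : ℝ → ℝ := fun θ => Real.sin (φ θ) / p θ with hgdef
  have hφd : ∀ θ : ℝ, HasDerivAt φ (p θ) θ := by
    intro θ
    have h1 : HasDerivAt (fun θ : ℝ => 2 * θ) 2 θ := by
      simpa using (hasDerivAt_id θ).const_mul 2
    have h2 : HasDerivAt (fun θ : ℝ => x * Real.sin θ) (x * Real.cos θ) θ :=
      (Real.hasDerivAt_sin θ).const_mul x
    exact h1.sub h2
  have hpd : ∀ θ : ℝ, HasDerivAt p (x * Real.sin θ) θ := by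
    intro θ
    have h2 : HasDerivAt (fun θ : ℝ => x * Real.cos θ) (x * -Real.sin θ) θ :=
      (Real.hasDerivAt_cos θ).const_mul x
    exact ((hasDerivAt_const θ (2:ℝ)).sub h2).congr_deriv (by ring)
  have hgd : ∀ θ ∈ Set.Icc a b, HasDerivAt g
      (Real.cos (φ θ) - Real.sin (φ θ) * (x * Real.sin θ) / (p θ)^2) θ := by
    intro θ hθ
    have hne := hpne θ hθ
    have hd : HasDerivAt g
        ((Real.cos (φ θ) * p θ * p θ - Real.sin (φ θ) * (x * Real.sin θ)) / (p θ)^2) θ :=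
      ((hφd θ).sin.div (hpd θ) hne)
    convert hd using 1
    field_simp
  set hfun : ℝ → ℝ := fun θ => -(1 / p θ) with hhdef
  have hhd : ∀ θ ∈ Set.Icc a b, HasDerivAt hfun (x * Real.sin θ / (p θ)^2) θ := by
    intro θ hθ
    have hne := hpne θ hθ
    have := ((hasDerivAt_const θ (1:ℝ)).div (hpd θ) hne).neg
    refine this.congr_deriv ?_
    field_simp
    ring
  have hIcc : Set.uIcc a b = Set.Icc a b := Set.uIcc_of_le hab
  have hcont1 : ContinuousOn (fun θ => Real.cos (φ θ)) (Set.Icc a b) := by fun_prop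
  have hcont2 : ContinuousOn (fun θ => Real.sin (φ θ) * (x * Real.sin θ) / (p θ)^2)
      (Set.Icc a b) := by
    apply ContinuousOn.div (by fun_prop) (by fun_prop)
    intro θ hθ; exact pow_ne_zero 2 (hpne θ hθ)
  have hcont3 : ContinuousOn (fun θ => x * Real.sin θ / (p θ)^2) (Set.Icc a b) := by
    apply ContinuousOn.div (by fun_prop) (by fun_prop)
    intro θ hθ; exact pow_ne_zero 2 (hpne θ hθ)
  have hint2 : IntervalIntegrable (fun θ => Real.sin (φ θ) * (x * Real.sin θ) / (p θ)^2)
      volume a b := (hcont2.mono hIcc.le).intervalIntegrable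
  have hint3 : IntervalIntegrable (fun θ => x * Real.sin θ / (p θ)^2) volume a b :=
    (hcont3.mono hIcc.le).intervalIntegrable
  have hftc : ∫ θ in a..b, (Real.cos (φ θ) - Real.sin (φ θ) * (x * Real.sin θ) / (p θ)^2)
      = g b - g a := by
    apply integral_eq_sub_of_hasDerivAt
    · intro θ hθ; exact hgd θ (hIcc ▸ hθ)
    · exact ((hcont1.sub hcont2).mono hIcc.le).intervalIntegrable
  have hftc2 : ∫ θ in a..b, x * Real.sin θ / (p θ)^2 = hfun b - hfun a := by
    apply integral_eq_sub_of_hasDerivAt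
    · intro θ hθ; exact hhd θ (hIcc ▸ hθ)
    · exact hint3
  have hsplit : ∫ θ in a..b, Real.cos (φ θ)
      = (g b - g a) + ∫ θ in a..b, Real.sin (φ θ) * (x * Real.sin θ) / (p θ)^2 := by
    rw [← hftc,
      ← integral_add (f := fun θ => Real.cos (φ θ) - Real.sin (φ θ) * (x * Real.sin θ) / (p θ)^2) (((hcont1.sub hcont2).mono hIcc.le).intervalIntegrable) hint2]
    refine integral_congr fun θ _ => by ring
  -- bound on g at endpoints
  have hgbd : ∀ θ ∈ Set.Icc a b, |g θ| ≤ 1 / lam := by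
    intro θ hθ
    rw [hgdef]; simp only [abs_div]
    apply div_le_div₀ (by positivity) (abs_le.mpr ⟨Real.neg_one_le_sin _, Real.sin_le_one _⟩)
      hlam (habs θ hθ)
  -- bound on the remainder integral
  have hrem : |∫ θ in a..b, Real.sin (φ θ) * (x * Real.sin θ) / (p θ)^2| ≤ 2 / lam := by
    have hbd : |∫ θ in a..b, Real.sin (φ θ) * (x * Real.sin θ) / (p θ)^2|
        ≤ |∫ θ in a..b, x * Real.sin θ / (p θ)^2| := by
      simp only [← Real.norm_eq_abs]
      apply intervalIntegral.norm_integral_le_abs_of_norm_le ?_ hint3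
      rw [Set.uIoc_of_le hab]
      refine (ae_restrict_iff' measurableSet_Ioc).mpr (ae_of_all _ fun θ hθ => ?_)
      have hθ' : θ ∈ Set.Icc a b := Set.mem_Icc.mpr ⟨le_of_lt hθ.1, hθ.2⟩
      have hs : 0 ≤ x * Real.sin θ :=
        mul_nonneg hx.le (Real.sin_nonneg_of_nonneg_of_le_pi (ha.trans hθ'.1) (hθ'.2.trans hb))
      rw [Real.norm_eq_abs, abs_div, abs_mul, abs_of_nonneg hs, abs_of_nonneg (sq_nonneg (p θ))]
      apply div_le_div₀ (by positivity) ?_ ?_ le_rfl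
      · exact mul_le_of_le_one_left hs (abs_le.mpr ⟨Real.neg_one_le_sin _, Real.sin_le_one _⟩)
      · exact pow_two_pos_of_ne_zero (hpne θ hθ')
    rw [hftc2] at hbd
    refine hbd.trans ?_
    have h1 : |hfun a| ≤ 1 / lam := by
      rw [hhdef]; simp only [abs_neg, abs_div, abs_one]
      apply div_le_div₀ (by positivity) le_rfl hlam (habs a (Set.left_mem_Icc.mpr hab))
    have h2 : |hfun b| ≤ 1 / lam := by
      rw [hhdef]; simp only [abs_neg, abs_div, abs_one]
      apply div_le_div₀ (by positivity) le_rfl hlam (habs b (Set.right_mem_Icc.mpr hab))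
    calc |hfun b - hfun a|
        ≤ |hfun b| + |hfun a| := abs_sub _ _
      _ ≤ 1 / lam + 1 / lam := add_le_add h2 h1
      _ = 2 / lam := by ring
  calc |∫ θ in a..b, Real.cos (2 * θ - x * Real.sin θ)|
      = |(g b - g a) + ∫ θ in a..b, Real.sin (φ θ) * (x * Real.sin θ) / (p θ)^2| := by
        rw [← hsplit]
    _ ≤ |g b - g a| + |∫ θ in a..b, Real.sin (φ θ) * (x * Real.sin θ) / (p θ)^2| :=
        abs_add_le _ _
    _ ≤ (|g b| + |g a|) + 2 / lam := add_le_add (abs_sub _ _) hrem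
    _ ≤ (1 / lam + 1 / lam) + 2 / lam :=
        add_le_add (add_le_add (hgbd b (Set.right_mem_Icc.mpr hab))
          (hgbd a (Set.left_mem_Icc.mpr hab))) le_rfl
    _ = 4 / lam := by ring

lemma sin_ge_half {θ : ℝ} (h1 : π/6 ≤ θ) (h2 : θ ≤ 5*π/6) : 1/2 ≤ Real.sin θ := by
  rcases le_or_gt θ (π/2) with h | h
  · have := Real.sin_le_sin_of_le_of_le_pi_div_two (by linarith [Real.pi_pos] : -(π/2) ≤ π/6) h h1
    rwa [Real.sin_pi_div_six] at this
  · have h3 : π - θ ≤ π/2 := by linarith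
    have h4 : π/6 ≤ π - θ := by linarith
    have := Real.sin_le_sin_of_le_of_le_pi_div_two
      (by linarith [Real.pi_pos] : -(π/2) ≤ π/6) h3 h4
    rwa [Real.sin_pi_div_six, Real.sin_pi_sub] at this

set_option maxHeartbeats 1000000 in
lemma integral_cos_phase_bound {x : ℝ} (hx8 : 8 ≤ x) :
    |∫ θ in (0:ℝ)..π, Real.cos (2 * θ - x * Real.sin θ)| ≤ 34 / Real.sqrt x := by
  have hx : 0 < x := by linarith
  set s := Real.sqrt x with hs
  have hs0 : 0 < s := Real.sqrt_pos.mpr hx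
  have hs2 : s^2 = x := Real.sq_sqrt hx.le
  have hs28 : 2.8 ≤ s := by
    rw [hs]; rw [show (2.8:ℝ) = Real.sqrt (2.8^2) by rw [Real.sqrt_sq]; norm_num]
    exact Real.sqrt_le_sqrt (by norm_num; linarith)
  set δ := 1 / s with hδ
  have hδ0 : 0 < δ := by positivity
  have hδ36 : δ ≤ 0.36 := by
    rw [hδ]; rw [div_le_iff₀ hs0]; nlinarith
  have hπ3 : (3:ℝ) ≤ π := by linarith [Real.pi_gt_three]
  have hc1 : 2 / x ≤ 1/4 := by rw [div_le_iff₀ hx]; linarith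
  have hc0 : 0 < 2 / x := by positivity
  set θ₀ := Real.arccos (2/x) with hθ₀
  have hcosθ₀ : Real.cos θ₀ = 2/x := Real.cos_arccos (by linarith) (by linarith)
  have hθ₀ge : π/3 ≤ θ₀ := by
    have : Real.arccos (1/2) = π/3 := by
      rw [show (1/2 : ℝ) = Real.cos (π/3) by rw [Real.cos_pi_div_three]]
      exact Real.arccos_cos (by positivity) (by linarith)
    rw [hθ₀, ← this, Real.arccos_eq_pi_div_two_sub_arcsin, Real.arccos_eq_pi_div_two_sub_arcsin]
    have := monotone_arcsin (by linarith : 2/x ≤ 1/2)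
    linarith
  have hθ₀le : θ₀ ≤ π/2 := Real.arccos_le_pi_div_two.mpr (by positivity)
  -- sin(δ/2) ≥ δ/4
  have hsinδ : δ/4 ≤ Real.sin (δ/2) := by
    have h1 : 0 < δ/2 := by linarith
    have h2 : δ/2 ≤ 1 := by linarith
    have := Real.sin_gt_sub_cube h1
    nlinarith [mul_nonneg (mul_nonneg hδ0.le hδ0.le) hδ0.le]
  -- key cosine difference bounds
  have hmid1 : 1/2 ≤ Real.sin (θ₀ - δ/2) :=
    sin_ge_half (by linarith) (by linarith)
  have hmid2 : 1/2 ≤ Real.sin (θ₀ + δ/2) :=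
    sin_ge_half (by linarith) (by linarith)
  have hdiff1 : Real.cos (θ₀ - δ) - Real.cos θ₀ = 2 * Real.sin (θ₀ - δ/2) * Real.sin (δ/2) := by
    rw [Real.cos_sub_cos]
    rw [show (θ₀ - δ + θ₀)/2 = θ₀ - δ/2 by ring, show (θ₀ - δ - θ₀)/2 = -(δ/2) by ring,
      Real.sin_neg]
    ring
  have hdiff2 : Real.cos θ₀ - Real.cos (θ₀ + δ) = 2 * Real.sin (θ₀ + δ/2) * Real.sin (δ/2) := by
    rw [Real.cos_sub_cos]
    rw [show (θ₀ + (θ₀ + δ))/2 = θ₀ + δ/2 by ring, show (θ₀ - (θ₀ + δ))/2 = -(δ/2) by ring,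
      Real.sin_neg]
    ring
  set lam := s / 4 with hlam
  have hlam0 : 0 < lam := by positivity
  have hxδ : x * δ = s := by rw [hδ]; field_simp; nlinarith
  -- derivative lower bound on the left interval
  have hleft : ∀ θ ∈ Set.Icc (0:ℝ) (θ₀ - δ), lam ≤ |2 - x * Real.cos θ| := by
    intro θ hθ
    have hθ1 : 0 ≤ θ := hθ.1
    have hθ2 : θ ≤ θ₀ - δ := hθ.2
    have hcos : Real.cos (θ₀ - δ) ≤ Real.cos θ :=
      Real.cos_le_cos_of_nonneg_of_le_pi hθ1 (by linarith) hθ2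
    have hkey : lam ≤ x * Real.cos (θ₀ - δ) - 2 := by
      have : x * Real.cos (θ₀ - δ) - 2 = x * (Real.cos (θ₀ - δ) - Real.cos θ₀) := by
        rw [hcosθ₀]; field_simp
      rw [this, hdiff1]
      calc lam = x * δ / 4 := by rw [hlam, hxδ]
        _ ≤ x * (2 * (1/2) * (δ/4)) := le_of_eq (by ring)
        _ ≤ x * (2 * Real.sin (θ₀ - δ/2) * Real.sin (δ/2)) := by
            apply mul_le_mul_of_nonneg_left _ hx.le
            have hkey := mul_le_mul hmid1 hsinδ (by linarith)
              (by linarith : (0:ℝ) ≤ Real.sin (θ₀ - δ/2))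
            linarith
    refine le_abs.mpr (Or.inr ?_)
    have : x * Real.cos (θ₀ - δ) ≤ x * Real.cos θ := mul_le_mul_of_nonneg_left hcos hx.le
    linarith
  -- derivative lower bound on the right interval
  have hright : ∀ θ ∈ Set.Icc (θ₀ + δ) π, lam ≤ |2 - x * Real.cos θ| := by
    intro θ hθ
    have hcos : Real.cos θ ≤ Real.cos (θ₀ + δ) :=
      Real.cos_le_cos_of_nonneg_of_le_pi (by linarith [hθ.1]) hθ.2 hθ.1
    have hkey : lam ≤ 2 - x * Real.cos (θ₀ + δ) := by
      have : 2 - x * Real.cos (θ₀ + δ) = x * (Real.cos θ₀ - Real.cos (θ₀ + δ)) := by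
        rw [hcosθ₀]; field_simp
      rw [this, hdiff2]
      calc lam = x * δ / 4 := by rw [hlam, hxδ]
        _ ≤ x * (2 * (1/2) * (δ/4)) := le_of_eq (by ring)
        _ ≤ x * (2 * Real.sin (θ₀ + δ/2) * Real.sin (δ/2)) := by
            apply mul_le_mul_of_nonneg_left _ hx.le
            have hkey := mul_le_mul hmid2 hsinδ (by linarith)
              (by linarith : (0:ℝ) ≤ Real.sin (θ₀ + δ/2))
            linarith
    refine le_abs.mpr (Or.inl ?_)
    have : x * Real.cos θ ≤ x * Real.cos (θ₀ + δ) := mul_le_mul_of_nonneg_left hcos hx.le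
    linarith
  -- the three pieces
  have hL := osc_bound x 0 (θ₀ - δ) lam hx le_rfl (by linarith) (by linarith) hlam0 hleft
  have hR := osc_bound x (θ₀ + δ) π lam hx (by linarith) (by linarith) le_rfl hlam0 hright
  have hM : |∫ θ in (θ₀ - δ)..(θ₀ + δ), Real.cos (2 * θ - x * Real.sin θ)| ≤ 2 * δ := by
    have := intervalIntegral.norm_integral_le_of_norm_le_const
      (C := 1) (f := fun θ => Real.cos (2 * θ - x * Real.sin θ)) (a := θ₀ - δ) (b := θ₀ + δ)
      (fun θ _ => by rw [Real.norm_eq_abs]; exact Real.abs_cos_le_one _)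
    rw [Real.norm_eq_abs] at this
    calc |∫ θ in (θ₀ - δ)..(θ₀ + δ), Real.cos (2 * θ - x * Real.sin θ)|
        ≤ 1 * |(θ₀ + δ) - (θ₀ - δ)| := this
      _ = 2 * δ := by rw [one_mul, show (θ₀ + δ) - (θ₀ - δ) = 2*δ by ring,
          abs_of_nonneg (by linarith)]
  have hcont : ∀ u v : ℝ, IntervalIntegrable
      (fun θ => Real.cos (2 * θ - x * Real.sin θ)) volume u v :=
    fun u v => (Continuous.intervalIntegrable (by fun_prop) u v)
  have hsplit : ∫ θ in (0:ℝ)..π, Real.cos (2 * θ - x * Real.sin θ)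
      = (∫ θ in (0:ℝ)..(θ₀ - δ), Real.cos (2 * θ - x * Real.sin θ))
      + (∫ θ in (θ₀ - δ)..(θ₀ + δ), Real.cos (2 * θ - x * Real.sin θ))
      + (∫ θ in (θ₀ + δ)..π, Real.cos (2 * θ - x * Real.sin θ)) := by
    rw [integral_add_adjacent_intervals (hcont _ _) (hcont _ _),
      integral_add_adjacent_intervals (hcont _ _) (hcont _ _)]
  rw [hsplit]
  have h4lam : 4 / lam = 16 / s := by rw [hlam]; field_simp; norm_num
  calc |_ + _ + _| ≤ |_ + _| + |∫ θ in (θ₀ + δ)..π, Real.cos (2 * θ - x * Real.sin θ)| :=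
        abs_add_le _ _
    _ ≤ (|∫ θ in (0:ℝ)..(θ₀ - δ), Real.cos (2 * θ - x * Real.sin θ)|
        + |∫ θ in (θ₀ - δ)..(θ₀ + δ), Real.cos (2 * θ - x * Real.sin θ)|)
        + |∫ θ in (θ₀ + δ)..π, Real.cos (2 * θ - x * Real.sin θ)| :=
        add_le_add (abs_add_le _ _) le_rfl
    _ ≤ (4 / lam + 2 * δ) + 4 / lam := add_le_add (add_le_add hL hM) hR
    _ = 34 / s := by rw [h4lam, hδ]; field_simp; ring

lemma besselJ_abs_le_one (m : ℕ) (x : ℝ) : |besselJ m x| ≤ 1 := by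
  rw [besselJ, abs_mul]
  have h1 : |∫ θ in (0:ℝ)..π, Real.cos (m * θ - x * Real.sin θ)| ≤ 1 * |π - 0| := by
    rw [← Real.norm_eq_abs (∫ _ in _.._, _)]
    exact intervalIntegral.norm_integral_le_of_norm_le_const
      (fun θ _ => by rw [Real.norm_eq_abs]; exact Real.abs_cos_le_one _)
  rw [sub_zero, abs_of_nonneg Real.pi_pos.le, one_mul] at h1
  calc |1/π| * |∫ θ in (0:ℝ)..π, Real.cos (m * θ - x * Real.sin θ)|
      ≤ |1/π| * π := mul_le_mul_of_nonneg_left h1 (abs_nonneg _)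
    _ = 1 := by
        rw [abs_of_nonneg (by positivity : (0:ℝ) ≤ 1/π)]
        field_simp

lemma besselJ2_decay {x : ℝ} (hx : 0 < x) : |besselJ 2 x| ≤ 12 / Real.sqrt x := by
  have hs0 : 0 < Real.sqrt x := Real.sqrt_pos.mpr hx
  rcases le_or_gt 8 x with h8 | h8
  · have h := integral_cos_phase_bound h8
    have hπ3 : (3:ℝ) ≤ π := by linarith [Real.pi_gt_three]
    rw [besselJ, abs_mul, abs_of_nonneg (by positivity : (0:ℝ) ≤ 1/π)]
    have hcast : ((2:ℕ):ℝ) = 2 := by norm_num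
    rw [hcast]
    calc 1/π * |∫ θ in (0:ℝ)..π, Real.cos (2 * θ - x * Real.sin θ)|
        ≤ 1/π * (34 / Real.sqrt x) := mul_le_mul_of_nonneg_left h (by positivity)
      _ ≤ 1/3 * (34 / Real.sqrt x) := by
          apply mul_le_mul_of_nonneg_right _ (by positivity)
          rw [div_le_div_iff₀ (by linarith) (by norm_num)]
          linarith
      _ ≤ 12 / Real.sqrt x := by
          rw [show 1/3 * (34 / Real.sqrt x) = 34/3 / Real.sqrt x by ring,
            div_le_div_iff₀ hs0 hs0]
          nlinarith
  · have hs3 : Real.sqrt x ≤ 3 := by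
      rw [show (3:ℝ) = Real.sqrt 9 by rw [show (9:ℝ) = 3^2 by norm_num, Real.sqrt_sq]; norm_num]
      exact Real.sqrt_le_sqrt (by linarith)
    calc |besselJ 2 x| ≤ 1 := besselJ_abs_le_one 2 x
      _ ≤ 12 / Real.sqrt x := by rw [le_div_iff₀ hs0]; linarith

-- Parseval for two orthonormal vectors in ℝ²
lemma parseval_two (v₁ v₂ : EuclideanSpace ℝ (Fin 2))
    (hv₁ : ‖v₁‖ = 1) (hv₂ : ‖v₂‖ = 1) (hv : (inner ℝ v₁ v₂ : ℝ) = 0)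
    (u : EuclideanSpace ℝ (Fin 2)) :
    (inner ℝ u v₁ : ℝ)^2 + (inner ℝ u v₂ : ℝ)^2 = ‖u‖^2 := by
  set f : Fin 2 → EuclideanSpace ℝ (Fin 2) := ![v₁, v₂] with hf
  have hon : Orthonormal ℝ f := by
    rw [orthonormal_iff_ite]
    intro i j
    fin_cases i <;> fin_cases j <;>
      simp only [hf, Matrix.cons_val_zero, Matrix.cons_val_one, Matrix.head_cons,
        Fin.zero_eta, Fin.mk_one, if_true, reduceIte]
    · rw [real_inner_self_eq_norm_sq, hv₁]; norm_num
    · exact hv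
    · rw [real_inner_comm]; exact hv
    · rw [real_inner_self_eq_norm_sq, hv₂]; norm_num
  have hsp : ⊤ ≤ Submodule.span ℝ (Set.range f) := by
    rw [hon.linearIndependent.span_eq_top_of_card_eq_finrank (by simp)]
  set b : OrthonormalBasis (Fin 2) ℝ (EuclideanSpace ℝ (Fin 2)) := OrthonormalBasis.mk hon hsp
    with hb
  have hpar := b.sum_inner_mul_inner u u
  rw [Fin.sum_univ_two] at hpar
  have hb0 : b 0 = v₁ := by rw [hb, OrthonormalBasis.coe_mk]; rfl
  have hb1 : b 1 = v₂ := by rw [hb, OrthonormalBasis.coe_mk]; rfl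
  rw [hb0, hb1, real_inner_self_eq_norm_sq] at hpar
  calc (inner ℝ u v₁ : ℝ)^2 + (inner ℝ u v₂ : ℝ)^2
      = (inner ℝ u v₁ : ℝ) * (inner ℝ v₁ u : ℝ) + (inner ℝ u v₂ : ℝ) * (inner ℝ v₂ u : ℝ) := by
        rw [real_inner_comm v₁ u, real_inner_comm v₂ u]; ring
    _ = ‖u‖^2 := hpar

lemma latVec_norm_sq (n : ℤ × ℤ) : ‖latVec n‖^2 = (n.1:ℝ)^2 + (n.2:ℝ)^2 := by
  rw [latVec, EuclideanSpace.norm_eq, Real.sq_sqrt (by positivity)]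
  simp [Fin.sum_univ_two, sq_abs]

lemma Qform_ge (v₁ v₂ : EuclideanSpace ℝ (Fin 2)) (a₁ a₂ : ℝ)
    (hv₁ : ‖v₁‖ = 1) (hv₂ : ‖v₂‖ = 1) (hv : (inner ℝ v₁ v₂ : ℝ) = 0)
    (ha₁ : 0 < a₁) (ha₂ : 0 < a₂) (n : ℤ × ℤ) :
    (min a₁ a₂)^2 * ((n.1:ℝ)^2 + (n.2:ℝ)^2) ≤ Qform v₁ v₂ a₁ a₂ n := by
  have hpar := parseval_two v₁ v₂ hv₁ hv₂ hv (latVec n)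
  rw [latVec_norm_sq] at hpar
  have hm1 : (min a₁ a₂)^2 ≤ a₁^2 := by
    have := min_le_left a₁ a₂
    nlinarith [lt_min ha₁ ha₂]
  have hm2 : (min a₁ a₂)^2 ≤ a₂^2 := by
    have := min_le_right a₁ a₂
    nlinarith [lt_min ha₁ ha₂]
  rw [Qform]
  have e1 : (a₁ * (inner ℝ (latVec n) v₁ : ℝ))^2 = a₁^2 * (inner ℝ (latVec n) v₁ : ℝ)^2 := by ring
  have e2 : (a₂ * (inner ℝ (latVec n) v₂ : ℝ))^2 = a₂^2 * (inner ℝ (latVec n) v₂ : ℝ)^2 := by ring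
  rw [e1, e2, ← hpar]
  nlinarith [sq_nonneg (inner ℝ (latVec n) v₁ : ℝ), sq_nonneg (inner ℝ (latVec n) v₂ : ℝ)]

-- norm comparison with the sup norm on (Fin 2 → ℤ)
lemma sup_norm_sq_le (n : ℤ × ℤ) :
    ‖(![n.1, n.2] : Fin 2 → ℤ)‖^2 ≤ (n.1:ℝ)^2 + (n.2:ℝ)^2 := by
  rw [EisensteinSeries.norm_eq_max_natAbs]
  simp only [Matrix.cons_val_zero, Matrix.cons_val_one, Matrix.head_cons]
  have h1 : ((n.1.natAbs : ℝ))^2 = (n.1:ℝ)^2 := by rw [Nat.cast_natAbs, Int.cast_abs, sq_abs]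
  have h2 : ((n.2.natAbs : ℝ))^2 = (n.2:ℝ)^2 := by rw [Nat.cast_natAbs, Int.cast_abs, sq_abs]
  rw [Nat.cast_max]
  rcases max_cases ((n.1.natAbs : ℝ)) ((n.2.natAbs : ℝ)) with ⟨h, _⟩ | ⟨h, _⟩ <;> rw [h] <;>
    nlinarith [sq_nonneg ((n.1.natAbs : ℝ)), sq_nonneg ((n.2.natAbs : ℝ))]

/-- main theorem -/
theorem ellipse_sum_absolutely_summable (v₁ v₂ : EuclideanSpace ℝ (Fin 2)) (a₁ a₂ : ℝ)
    (hv₁ : ‖v₁‖ = 1) (hv₂ : ‖v₂‖ = 1) (hv : (inner ℝ v₁ v₂ : ℝ) = 0)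
    (ha₁ : 0 < a₁) (ha₂ : 0 < a₂) (R : ℝ) (hR : 0 < R) :
    Summable (fun n : {n : ℤ × ℤ // n ≠ 0} =>
      |(a₁ * a₂ / (π * Qform v₁ v₂ a₁ a₂ n.1))
        * besselJ 2 (Real.sqrt (Qform v₁ v₂ a₁ a₂ n.1) * Real.sqrt R)|) := by
  have hπ : (0:ℝ) < π := Real.pi_pos
  set m := min a₁ a₂ with hm
  have hm0 : 0 < m := lt_min ha₁ ha₂
  have hR4 : 0 < Real.sqrt (Real.sqrt R) := Real.sqrt_pos.mpr (Real.sqrt_pos.mpr hR)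
  set C : ℝ := 12 * a₁ * a₂ / (π * Real.sqrt (Real.sqrt R) * (m^2 * Real.sqrt m)) with hC
  have hC0 : 0 < C := by
    rw [hC]; positivity
  -- summability of the majorant
  have hmaj : Summable (fun n : ℤ × ℤ => C * ‖(![n.1, n.2] : Fin 2 → ℤ)‖ ^ (-(5/2) : ℝ)) := by
    have h := EisensteinSeries.summable_one_div_norm_rpow (by norm_num : (2:ℝ) < 5/2)
    have h2 := ((finTwoArrowEquiv ℤ).symm.summable_iff
      (f := fun v : Fin 2 → ℤ => ‖v‖ ^ (-(5/2):ℝ))).mpr h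
    have h3 : Summable (fun n : ℤ × ℤ => ‖(![n.1, n.2] : Fin 2 → ℤ)‖ ^ (-(5/2) : ℝ)) := by
      apply h2.congr
      intro n
      simp [finTwoArrowEquiv, Function.comp]
    exact h3.mul_left C
  apply Summable.of_nonneg_of_le (fun n => abs_nonneg _)
    (f := fun n : {n : ℤ × ℤ // n ≠ 0} => C * ‖(![n.1.1, n.1.2] : Fin 2 → ℤ)‖ ^ (-(5/2) : ℝ))
    (hf := hmaj.comp_injective Subtype.coe_injective)
  intro n
  set q := Qform v₁ v₂ a₁ a₂ n.1 with hq
  set N := ‖(![n.1.1, n.1.2] : Fin 2 → ℤ)‖ with hN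
  have hN0 : 0 < N := by
    rw [hN, norm_pos_iff]
    intro h0
    apply n.2
    have h1 : n.1.1 = 0 := by have := congrFun h0 0; simpa using this
    have h2 : n.1.2 = 0 := by have := congrFun h0 1; simpa using this
    exact Prod.ext h1 h2
  have hsup := sup_norm_sq_le n.1
  rw [← hN] at hsup
  have hqge : m^2 * N^2 ≤ q := by
    calc m^2 * N^2 ≤ m^2 * ((n.1.1:ℝ)^2 + (n.1.2:ℝ)^2) := by nlinarith
      _ ≤ q := Qform_ge v₁ v₂ a₁ a₂ hv₁ hv₂ hv ha₁ ha₂ n.1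
  have hq0 : 0 < q := lt_of_lt_of_le (by positivity) hqge
  have hx0 : 0 < Real.sqrt q * Real.sqrt R := by positivity
  have hq4 : 0 < Real.sqrt (Real.sqrt q) := by positivity
  -- split the sqrt of the product
  have hsx : Real.sqrt (Real.sqrt q * Real.sqrt R)
      = Real.sqrt (Real.sqrt q) * Real.sqrt (Real.sqrt R) :=
    Real.sqrt_mul (Real.sqrt_nonneg q) _
  -- key monotonicity
  have hkey : (m^2 * Real.sqrt m) * (N^2 * Real.sqrt N) ≤ q * Real.sqrt (Real.sqrt q) := by
    have h2 : Real.sqrt (Real.sqrt (m^2 * N^2)) = Real.sqrt m * Real.sqrt N := by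
      rw [show m^2*N^2 = (m*N)^2 by ring, Real.sqrt_sq (by positivity),
        Real.sqrt_mul hm0.le]
    calc (m^2 * Real.sqrt m) * (N^2 * Real.sqrt N)
        = (m^2 * N^2) * Real.sqrt (Real.sqrt (m^2 * N^2)) := by rw [h2]; ring
      _ ≤ q * Real.sqrt (Real.sqrt q) := by
          apply mul_le_mul hqge (Real.sqrt_le_sqrt (Real.sqrt_le_sqrt hqge)) (by positivity)
            hq0.le
  -- rewrite the rpow
  have hrpow : N ^ (-(5/2) : ℝ) = 1 / (N^2 * Real.sqrt N) := by
    rw [Real.rpow_neg hN0.le, show (5/2:ℝ) = 2 + 1/2 by norm_num,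
      Real.rpow_add hN0, Real.rpow_two, ← Real.sqrt_eq_rpow, one_div]
  -- the chain
  have hbes := besselJ2_decay hx0
  calc |(a₁ * a₂ / (π * q)) * besselJ 2 (Real.sqrt q * Real.sqrt R)|
      = (a₁ * a₂ / (π * q)) * |besselJ 2 (Real.sqrt q * Real.sqrt R)| := by
        rw [abs_mul, abs_of_pos (by positivity)]
    _ ≤ (a₁ * a₂ / (π * q)) * (12 / Real.sqrt (Real.sqrt q * Real.sqrt R)) := by
        apply mul_le_mul_of_nonneg_left hbes (by positivity)
    _ = (12 * a₁ * a₂) / (π * Real.sqrt (Real.sqrt R) * (q * Real.sqrt (Real.sqrt q))) := by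
        rw [hsx]; field_simp
    _ ≤ (12 * a₁ * a₂) / (π * Real.sqrt (Real.sqrt R)
          * ((m^2 * Real.sqrt m) * (N^2 * Real.sqrt N))) := by
        gcongr
    _ = C * N ^ (-(5/2) : ℝ) := by
        rw [hrpow, hC]; field_simp
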